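/- Let G be a finite graph on n vertices, let i = √-1, and fix any function b : E → {0,1} on oriented edges with b(v,u) = -b(u,v) mod 4. For each oriented edge choose s(u,v) uniformly and independently from {0,2}, and set s' = s + b mod 4. Then the expectation over s of det(xI - A_{s'}(i)) equals the matching polynomial μ_G(x). -/

import Mathlib

open scoped Classical

/-- The matrix `A_s(t)` of a shift function `s`. -/
def shiftMatrix {V : Type} [DecidableEq V] (G : SimpleGraph V) [DecidableRel G.Adj]
    {k : ℕ} (s : V → V → ZMod k) (t : ℂ) : Matrix V V ℂ :=
  Matrix.of (fun u v => if G.Adj u v then t ^ (s u v).val else 0)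

/-- The antisymmetric shift function determined by independent values `f u v` on
oriented edges `(u,v)` with `u < v`. -/
def orientShift {V : Type} [LinearOrder V] {k : ℕ} (f : V → V → ZMod k) (u v : V) : ZMod k :=
  if u < v then f u v else - f v u

/-- The number of matchings of `G` with exactly `k` edges. -/
noncomputable def matchingCount {V : Type} [Fintype V] [DecidableEq V]
    (G : SimpleGraph V) (k : ℕ) : ℕ :=
  ((G.edgeFinset.powersetCard k).filter
    (fun M => ∀ e ∈ M, ∀ f ∈ M, e ≠ f → ∀ v : V, v ∈ e → v ∉ f)).card

/-- The matching polynomial `μ_G` of `G`, evaluated at `x`. -/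
noncomputable def matchingPolyEval {V : Type} [Fintype V] [DecidableEq V]
    (G : SimpleGraph V) (x : ℂ) : ℂ :=
  ∑ k ∈ Finset.range (Fintype.card V / 2 + 1),
    (-1 : ℂ) ^ k * (matchingCount G k) * x ^ (Fintype.card V - 2 * k)



lemma I_pow_mod (n : ℕ) : Complex.I ^ n = Complex.I ^ (n % 4) := by
  conv_lhs => rw [← Nat.div_add_mod n 4]
  rw [pow_add, pow_mul, Complex.I_pow_four, one_pow, one_mul]

lemma I_pow_zmod_add (a b : ZMod 4) :
    Complex.I ^ (a + b).val = Complex.I ^ a.val * Complex.I ^ b.val := by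
  rw [← pow_add, I_pow_mod, ZMod.val_add, I_pow_mod (a.val + b.val), Nat.mod_mod_of_dvd _ dvd_rfl]

lemma I_pow_neg_mul (a : ZMod 4) :
    Complex.I ^ a.val * Complex.I ^ (-a).val = 1 := by
  rw [← pow_add, I_pow_mod]
  have h : (a.val + (-a).val) % 4 = 0 := by revert a; decide
  rw [h, pow_zero]

lemma two_mul_val (e : ZMod 2) : ((2 : ZMod 4) * (e.val : ZMod 4)).val = 2 * e.val := by
  revert e; decide

lemma I_pow_shift (a : ZMod 4) (e : ZMod 2) :
    Complex.I ^ (a + 2 * (e.val : ZMod 4)).val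
      = Complex.I ^ a.val * (-1 : ℂ) ^ e.val := by
  rw [I_pow_zmod_add, two_mul_val, pow_mul, Complex.I_sq]

lemma neg_zmod2 (z : ZMod 2) : -z = z := by revert z; decide

lemma sum_zmod2_pow (m : ℕ) :
    (∑ z : ZMod 2, ((-1 : ℂ) ^ z.val) ^ m) = if Even m then 2 else 0 := by
  have : (∑ z : ZMod 2, ((-1 : ℂ) ^ z.val) ^ m) = 1 + (-1 : ℂ) ^ m := by
    show (∑ z : Fin 2, ((-1 : ℂ) ^ (z : Fin 2).val) ^ m) = _
    rw [Fin.sum_univ_two]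
    norm_num
  rw [this]
  by_cases h : Even m
  · rw [if_pos h, h.neg_one_pow]; norm_num
  · rw [if_neg h, ((Nat.not_even_iff_odd.1 h)).neg_one_pow]; norm_num


variable {V : Type} [Fintype V] [DecidableEq V] [LinearOrder V]

/-- ordered pair of endpoints of the edge `{v, σ v}` -/
def pkey (σ : Equiv.Perm V) (v : V) : V × V := if v < σ v then (v, σ v) else (σ v, v)

lemma orientShift_eq_pkey (c : V → V → ZMod 2) (σ : Equiv.Perm V) (v : V) :
    orientShift c (σ v) v = c (pkey σ v).1 (pkey σ v).2 := by
  unfold orientShift pkey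
  rcases lt_trichotomy v (σ v) with h | h | h
  · rw [if_pos h, if_neg (not_lt_of_gt h), neg_zmod2]
  · simp [← h, neg_zmod2]
  · rw [if_neg (not_lt_of_gt h), if_pos h]

lemma pkey_eq_cases {σ : Equiv.Perm V} {v w : V} (h : pkey σ w = pkey σ v) :
    w = v ∨ (w = σ v ∧ σ w = v) := by
  unfold pkey at h
  split_ifs at h with h1 h2 h2 <;> simp only [Prod.mk.injEq] at h
  · exact Or.inl h.1
  · first | exact Or.inr ⟨h.1, h.2⟩ | exact Or.inr ⟨h.2, h.1⟩
  · first | exact Or.inr ⟨h.1, h.2⟩ | exact Or.inr ⟨h.2, h.1⟩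
  · exact Or.inl h.2

omit [Fintype V] [DecidableEq V] in
lemma pkey_apply (σ : Equiv.Perm V) (a : V) (h : σ (σ a) = a) (hne : σ a ≠ a) :
    pkey σ (σ a) = pkey σ a := by
  unfold pkey
  rw [h]
  rcases lt_trichotomy a (σ a) with h1 | h1 | h1
  · rw [if_pos h1, if_neg (not_lt_of_gt h1)]
  · exact absurd h1.symm hne
  · rw [if_neg (not_lt_of_gt h1), if_pos h1]

lemma parity_iff (σ : Equiv.Perm V) :
    (∀ p : V × V, Even ((σ.support.filter (fun v => pkey σ v = p)).card))
      ↔ ∀ v, σ (σ v) = v := by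
  constructor
  · intro h v
    by_cases hv : σ v = v
    · rw [hv, hv]
    · have h1 : v ∈ σ.support.filter (fun w => pkey σ w = pkey σ v) :=
        Finset.mem_filter.2 ⟨Equiv.Perm.mem_support.2 hv, rfl⟩
      have h2 := h (pkey σ v)
      have hne0 : (σ.support.filter (fun w => pkey σ w = pkey σ v)).card ≠ 0 :=
        Finset.card_ne_zero_of_mem h1
      have hcard : 1 < (σ.support.filter (fun w => pkey σ w = pkey σ v)).card := by
        obtain ⟨r, hr⟩ := h2; omega
      obtain ⟨w, hw, hwv⟩ := Finset.exists_mem_ne hcard v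
      rcases pkey_eq_cases (Finset.mem_filter.1 hw).2 with h' | h'
      · exact absurd h' hwv
      · rw [← h'.1, h'.2]
  · intro h p
    by_cases hp : ∃ a, a ∈ σ.support.filter (fun v => pkey σ v = p)
    · obtain ⟨a, ha⟩ := hp
      have ha' := Finset.mem_filter.1 ha
      have hane : σ a ≠ a := Equiv.Perm.mem_support.1 ha'.1
      have hfib : σ.support.filter (fun v => pkey σ v = p) = {a, σ a} := by
        apply Finset.ext
        intro w
        simp only [Finset.mem_filter, Finset.mem_insert, Finset.mem_singleton]
        constructor
        · rintro ⟨hw1, hw2⟩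
          exact pkey_eq_cases (hw2.trans ha'.2.symm) |>.imp id And.left
        · rintro (rfl | rfl)
          · exact ⟨ha'.1, ha'.2⟩
          · exact ⟨Equiv.Perm.mem_support.2 (by rw [h a]; exact fun hc => hane hc.symm),
              by rw [pkey_apply σ a (h a) hane, ha'.2]⟩
      rw [hfib, Finset.card_pair (fun hc => hane hc.symm)]
      exact even_two
    · rw [Finset.filter_eq_empty_iff.2
        (fun {w} hw hc => hp ⟨w, Finset.mem_filter.2 ⟨hw, hc⟩⟩)]
      simp

omit [LinearOrder V] in
lemma sign_invol (σ : Equiv.Perm V) (h2 : σ * σ = 1) :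
    ∃ k, σ.support.card = 2 * k ∧ Equiv.Perm.sign σ = (-1 : ℤˣ) ^ k := by
  have hord : orderOf σ ∣ 2 := orderOf_dvd_of_pow_eq_one (by rw [pow_two]; exact h2)
  have hcyc : ∀ l ∈ σ.cycleType, l = 2 := by
    intro l hl
    have h1 : l ∣ 2 := (Multiset.dvd_lcm hl).trans (by rw [Equiv.Perm.lcm_cycleType]; exact hord)
    exact le_antisymm (Nat.le_of_dvd two_pos h1) (Equiv.Perm.two_le_of_mem_cycleType hl)
  have hrep : σ.cycleType = Multiset.replicate (Multiset.card σ.cycleType) 2 :=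
    Multiset.eq_replicate_card.2 hcyc
  have h1 : σ.cycleType.sum = 2 * Multiset.card σ.cycleType := by
    conv_lhs => rw [hrep]
    rw [Multiset.sum_replicate, smul_eq_mul, mul_comm]
  refine ⟨Multiset.card σ.cycleType, ?_, ?_⟩
  · rw [← Equiv.Perm.sum_cycleType, h1]
  · rw [Equiv.Perm.sign_of_cycleType, h1, pow_add, pow_mul]
    norm_num

lemma prod_neg_I (b : V → V → ZMod 4) (hb : ∀ u v, b v u = - b u v)
    (σ : Equiv.Perm V) (hinv : ∀ v, σ (σ v) = v) :
    (∏ v ∈ σ.support, (-(Complex.I ^ (b (σ v) v).val))) = 1 := by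
  apply Finset.prod_involution (fun a _ => σ a)
  · intro a ha
    rw [neg_mul_neg, hinv a, hb a (σ a), mul_comm]
    exact I_pow_neg_mul _
  · intro a ha _
    exact Equiv.Perm.mem_support.1 ha
  · intro a ha
    exact Equiv.Perm.mem_support.2 (by rw [hinv a]; exact fun hc => Equiv.Perm.mem_support.1 ha hc.symm)
  · intro a ha
    exact hinv a

lemma key_sum (G : SimpleGraph V) [DecidableRel G.Adj] (b : V → V → ZMod 4) (x : ℂ)
    (σ : Equiv.Perm V) :
    (∑ c : V → V → ZMod 2, ∏ v : V,
      ((if σ v = v then x else 0) -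
        (if G.Adj (σ v) v then
          Complex.I ^ (b (σ v) v).val * (-1 : ℂ) ^ ((c (pkey σ v).1 (pkey σ v).2).val)
        else 0)))
    = if (∀ v, σ (σ v) = v) ∧ (∀ v ∈ σ.support, G.Adj (σ v) v) then
        (2 : ℂ) ^ (Fintype.card V * Fintype.card V) *
          ((∏ v ∈ σ.support, (-(Complex.I ^ (b (σ v) v).val))) *
            x ^ (Fintype.card V - σ.support.card))
      else 0 := by
  by_cases hadj : ∀ v ∈ σ.support, G.Adj (σ v) v
  · -- rewrite each product
    have hprod : ∀ c : V → V → ZMod 2,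
        (∏ v : V, ((if σ v = v then x else 0) -
          (if G.Adj (σ v) v then
            Complex.I ^ (b (σ v) v).val * (-1 : ℂ) ^ ((c (pkey σ v).1 (pkey σ v).2).val)
          else 0)))
        = ((∏ v ∈ σ.support, (-(Complex.I ^ (b (σ v) v).val))) *
            x ^ (Fintype.card V - σ.support.card)) *
          (∏ v ∈ σ.support, (-1 : ℂ) ^ ((c (pkey σ v).1 (pkey σ v).2).val)) := by
      intro c
      rw [← Finset.prod_mul_prod_compl σ.support]
      have h1 : (∏ v ∈ σ.support, ((if σ v = v then x else 0) -
          (if G.Adj (σ v) v then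
            Complex.I ^ (b (σ v) v).val * (-1 : ℂ) ^ ((c (pkey σ v).1 (pkey σ v).2).val)
          else 0)))
          = ∏ v ∈ σ.support,
            ((-(Complex.I ^ (b (σ v) v).val)) * (-1 : ℂ) ^ ((c (pkey σ v).1 (pkey σ v).2).val)) := by
        apply Finset.prod_congr rfl
        intro v hv
        rw [if_neg (Equiv.Perm.mem_support.1 hv), if_pos (hadj v hv), zero_sub, neg_mul]
      have h2 : (∏ v ∈ σ.supportᶜ, ((if σ v = v then x else 0) -
          (if G.Adj (σ v) v then
            Complex.I ^ (b (σ v) v).val * (-1 : ℂ) ^ ((c (pkey σ v).1 (pkey σ v).2).val)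
          else 0)))
          = x ^ (Fintype.card V - σ.support.card) := by
        rw [Finset.prod_congr rfl (fun v hv => ?_), Finset.prod_const, Finset.card_compl]
        have hfix : σ v = v := by
          have := Finset.mem_compl.1 hv
          simpa [Equiv.Perm.mem_support] using this
        rw [if_pos hfix, hfix, if_neg (G.irrefl), sub_zero]
      rw [h1, h2, Finset.prod_mul_distrib]
      ring
    rw [Finset.sum_congr rfl (fun c _ => hprod c), ← Finset.mul_sum]
    -- now evaluate the character sum
    have hswap : (∑ c : V → V → ZMod 2,
        ∏ v ∈ σ.support, (-1 : ℂ) ^ ((c (pkey σ v).1 (pkey σ v).2).val))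
        = ∏ p : V × V, ∑ z : ZMod 2,
            ((-1 : ℂ) ^ z.val) ^ ((σ.support.filter (fun v => pkey σ v = p)).card) := by
      rw [← Fintype.sum_equiv (Equiv.curry V V (ZMod 2))
        (fun d : V × V → ZMod 2 => ∏ v ∈ σ.support, (-1 : ℂ) ^ ((d (pkey σ v)).val))
        _ (fun d => Finset.prod_congr rfl (fun v _ => by
          simp [Equiv.curry, Function.curry]))]
      have hexp : ∀ d : V × V → ZMod 2,
          (∏ v ∈ σ.support, (-1 : ℂ) ^ ((d (pkey σ v)).val))
          = ∏ p : V × V, ((-1 : ℂ) ^ ((d p).val)) ^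
              ((σ.support.filter (fun v => pkey σ v = p)).card) := by
        intro d
        rw [Finset.prod_comp (fun p => (-1 : ℂ) ^ ((d p).val)) (fun v => pkey σ v)]
        apply Finset.prod_subset (Finset.subset_univ _)
        intro p _ hp
        have : (σ.support.filter (fun v => pkey σ v = p)) = ∅ :=
          Finset.filter_eq_empty_iff.2 (fun {w} hw hc => hp (Finset.mem_image.2 ⟨w, hw, hc⟩))
        rw [this, Finset.card_empty, pow_zero]
      rw [Finset.sum_congr rfl (fun d _ => hexp d)]
      rw [Finset.prod_univ_sum]
      rw [← Fintype.piFinset_univ]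
    rw [hswap]
    rw [Finset.prod_congr rfl (fun p _ => sum_zmod2_pow _)]
    by_cases hpar : ∀ p : V × V, Even ((σ.support.filter (fun v => pkey σ v = p)).card)
    · rw [if_pos ⟨(parity_iff σ).1 hpar, hadj⟩]
      rw [Finset.prod_congr rfl (fun p _ => if_pos (hpar p)), Finset.prod_const]
      simp [Fintype.card_prod]
      ring
    · push_neg at hpar
      obtain ⟨p, hp⟩ := hpar
      rw [if_neg (fun hc => hp (((parity_iff σ).2 hc.1) p))]
      have h0 : (∏ q : V × V, if Even ((σ.support.filter (fun v => pkey σ v = q)).card)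
          then (2 : ℂ) else 0) = 0 :=
        Finset.prod_eq_zero (Finset.mem_univ p) (if_neg hp)
      rw [h0]
      ring
  · rw [if_neg (fun hc => hadj hc.2)]
    apply Finset.sum_eq_zero
    intro c _
    push_neg at hadj
    obtain ⟨v, hv, hnadj⟩ := hadj
    apply Finset.prod_eq_zero (Finset.mem_univ v)
    rw [if_neg (Equiv.Perm.mem_support.1 hv), if_neg hnadj, sub_zero]

omit [Fintype V] [LinearOrder V] in
lemma edge_of_mem {σ : Equiv.Perm V} (hinv : ∀ v, σ (σ v) = v) {v a : V}
    (h : v ∈ s(a, σ a)) : s(v, σ v) = s(a, σ a) := by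
  rcases Sym2.mem_iff.1 h with rfl | rfl
  · rfl
  · rw [hinv a, Sym2.eq_swap]

omit [LinearOrder V] in
lemma support_card_eq (σ : Equiv.Perm V) (hinv : ∀ v, σ (σ v) = v) :
    σ.support.card = 2 * (σ.support.image (fun v => s(v, σ v))).card := by
  rw [Finset.card_eq_sum_card_fiberwise (f := fun v => s(v, σ v))
    (t := σ.support.image (fun v => s(v, σ v))) (fun v hv => Finset.mem_image_of_mem _ hv)]
  rw [Finset.sum_congr rfl (fun e he => ?_), Finset.sum_const, smul_eq_mul, mul_comm]
  obtain ⟨a, ha, rfl⟩ := Finset.mem_image.1 he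
  have hane : σ a ≠ a := Equiv.Perm.mem_support.1 ha
  have hfib : ({v ∈ σ.support | s(v, σ v) = s(a, σ a)} : Finset V) = {a, σ a} := by
    apply Finset.ext; intro w
    simp only [Finset.mem_filter, Finset.mem_insert, Finset.mem_singleton]
    constructor
    · rintro ⟨hw1, hw2⟩
      rcases Sym2.eq_iff.1 hw2 with ⟨h1, _⟩ | ⟨h1, _⟩
      · exact Or.inl h1
      · exact Or.inr h1
    · rintro (rfl | rfl)
      · exact ⟨ha, rfl⟩
      · exact ⟨Equiv.Perm.mem_support.2 (by rw [hinv a]; exact fun hc => hane hc.symm),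
          edge_of_mem hinv (Sym2.mem_mk_right a (σ a))⟩
  rw [hfib, Finset.card_pair (fun hc => hane hc.symm)]

lemma count_eq (G : SimpleGraph V) [DecidableRel G.Adj] (k : ℕ) :
    (Finset.univ.filter (fun σ : Equiv.Perm V =>
      ((∀ v, σ (σ v) = v) ∧ ∀ v ∈ σ.support, G.Adj (σ v) v) ∧ σ.support.card / 2 = k)).card
    = matchingCount G k := by
  unfold matchingCount
  apply Finset.card_bij (fun σ _ => σ.support.image (fun v => s(v, σ v)))
  · -- membership
    rintro σ hσ
    obtain ⟨⟨hinv, hadj⟩, hk⟩ := (Finset.mem_filter.1 hσ).2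
    have hcard := support_card_eq σ hinv
    refine Finset.mem_filter.2 ⟨Finset.mem_powersetCard.2 ⟨?_, by omega⟩, ?_⟩
    · intro e he
      obtain ⟨a, ha, rfl⟩ := Finset.mem_image.1 he
      simp only [SimpleGraph.mem_edgeFinset, SimpleGraph.mem_edgeSet]
      exact (hadj a ha).symm
    · intro e he f hf hef v hve hvf
      obtain ⟨a, _, rfl⟩ := Finset.mem_image.1 he
      obtain ⟨c, _, rfl⟩ := Finset.mem_image.1 hf
      exact hef ((edge_of_mem hinv hve).symm.trans (edge_of_mem hinv hvf))
  · -- injectivity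
    have claim : ∀ σ τ : Equiv.Perm V, (∀ v, τ (τ v) = v) →
        σ.support.image (fun v => s(v, σ v)) = τ.support.image (fun v => s(v, τ v)) →
        ∀ v, σ v ≠ v → τ v = σ v := by
      intro σ τ hτinv heq v hv
      have h1 : s(v, σ v) ∈ τ.support.image (fun v => s(v, τ v)) := by
        rw [← heq]
        exact Finset.mem_image_of_mem _ (Equiv.Perm.mem_support.2 hv)
      obtain ⟨w, hw, hwe⟩ := Finset.mem_image.1 h1
      have hv1 : v ∈ s(w, τ w) := by rw [hwe]; exact Sym2.mem_mk_left v (σ v)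
      have h2 : s(v, τ v) = s(v, σ v) := (edge_of_mem hτinv hv1).trans hwe
      rcases Sym2.eq_iff.1 h2 with ⟨_, h3⟩ | ⟨h3, h4⟩
      · exact h3
      · exact absurd h3.symm hv
    intro σ hσ τ hτ heq
    obtain ⟨⟨hσinv, _⟩, _⟩ := (Finset.mem_filter.1 hσ).2
    obtain ⟨⟨hτinv, _⟩, _⟩ := (Finset.mem_filter.1 hτ).2
    apply Equiv.ext
    intro v
    by_cases h1 : σ v = v
    · by_cases h2 : τ v = v
      · rw [h1, h2]
      · exact claim τ σ hσinv heq.symm v h2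
    · rw [claim σ τ hτinv heq v h1]
  · -- surjectivity
    intro M hM
    have hM' := Finset.mem_filter.1 hM
    obtain ⟨hMsub, hMcard⟩ := Finset.mem_powersetCard.1 hM'.1
    have huniq : ∀ (e f : Sym2 V), e ∈ M → f ∈ M → ∀ v, v ∈ e → v ∈ f → e = f := by
      intro e f he hf v hve hvf
      by_contra hc
      exact hM'.2 e he f hf hc v hve hvf
    classical
    set f : V → V := fun v =>
      if h : ∃ e ∈ M, v ∈ e then Sym2.Mem.other' h.choose_spec.2 else v with hfdef
    have hfspec : ∀ v, (∃ e ∈ M, v ∈ e) → s(v, f v) ∈ M := by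
      intro v h
      have : f v = Sym2.Mem.other' h.choose_spec.2 := by rw [hfdef]; exact dif_pos h
      rw [this, Sym2.other_spec' h.choose_spec.2]
      exact h.choose_spec.1
    have hffix : ∀ v, ¬(∃ e ∈ M, v ∈ e) → f v = v := by
      intro v h; rw [hfdef]; exact dif_neg h
    have hinvol : Function.Involutive f := by
      intro v
      by_cases h : ∃ e ∈ M, v ∈ e
      · have h1 : s(v, f v) ∈ M := hfspec v h
        have h2 : ∃ e ∈ M, f v ∈ e := ⟨s(v, f v), h1, Sym2.mem_mk_right v (f v)⟩
        have h3 : s(f v, f (f v)) ∈ M := hfspec (f v) h2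
        have h4 : s(f v, f (f v)) = s(v, f v) :=
          huniq _ _ h3 h1 (f v) (Sym2.mem_mk_left _ _) (Sym2.mem_mk_right _ _)
        rcases Sym2.eq_iff.1 h4 with ⟨h5, h6⟩ | ⟨_, h6⟩
        · rw [h6, h5]
        · exact h6
      · rw [hffix v h, hffix v h]
    set σ : Equiv.Perm V := hinvol.toPerm f with hσdef
    have hσapp : ∀ v, σ v = f v := fun v => rfl
    have hσsupp : ∀ v, v ∈ σ.support ↔ f v ≠ v := by
      intro v; rw [Equiv.Perm.mem_support, hσapp]
    have hexists : ∀ v, f v ≠ v → ∃ e ∈ M, v ∈ e := by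
      intro v hv
      by_contra hc
      exact hv (hffix v hc)
    have himg : σ.support.image (fun v => s(v, σ v)) = M := by
      apply Finset.ext
      intro e
      constructor
      · intro he
        obtain ⟨a, ha, rfl⟩ := Finset.mem_image.1 he
        exact hfspec a (hexists a ((hσsupp a).1 ha))
      · intro he
        have ha : e.out.1 ∈ e := Sym2.out_fst_mem e
        have h1 : s(e.out.1, f e.out.1) ∈ M := hfspec e.out.1 ⟨e, he, ha⟩
        have h2 : s(e.out.1, f e.out.1) = e :=
          huniq _ _ h1 he e.out.1 (Sym2.mem_mk_left _ _) ha
        have h3 : f e.out.1 ≠ e.out.1 := by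
          intro hc
          have hes : e ∈ G.edgeSet := by
            have h5 := hMsub he
            simp only [SimpleGraph.mem_edgeFinset] at h5
            exact h5
          apply G.not_isDiag_of_mem_edgeSet hes
          rw [← h2, hc]
          exact Sym2.mk_isDiag_iff.2 rfl
        exact Finset.mem_image.2 ⟨e.out.1, (hσsupp _).2 h3, h2⟩
    have hcard : σ.support.card = 2 * k := by
      rw [support_card_eq σ (fun v => hinvol v), himg, hMcard]
    refine ⟨σ, Finset.mem_filter.2 ⟨Finset.mem_univ σ, ⟨⟨fun v => hinvol v, ?_⟩, by omega⟩⟩, himg⟩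
    intro v hv
    have h1 : s(v, f v) ∈ M := hfspec v (hexists v ((hσsupp v).1 hv))
    have h2 : G.Adj v (f v) := by
      have h5 := hMsub h1
      simp only [SimpleGraph.mem_edgeFinset, SimpleGraph.mem_edgeSet] at h5
      exact h5
    exact (hσapp v) ▸ h2.symm

/-- Fix any `{0,1}`-valued shift `b`.  Choosing `s` uniformly from `{0,2}` on each oriented
edge and setting `s' = s + b (mod 4)`, the expectation of `det(xI - A_{s'}(i))` equals the
matching polynomial of `G`. -/
theorem expected_charpoly_shift4_eq_matchingPoly {V : Type} [Fintype V] [DecidableEq V]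
    [LinearOrder V] (G : SimpleGraph V) [DecidableRel G.Adj]
    (b : V → V → ZMod 4) (hb : ∀ u v, b v u = - b u v)
    (hb01 : ∀ u v, u < v → b u v = 0 ∨ b u v = 1) (x : ℂ) :
    (∑ c : V → V → ZMod 2,
        (x • (1 : Matrix V V ℂ) -
          shiftMatrix G (fun u v => b u v + 2 * ((orientShift c u v).val : ZMod 4))
            Complex.I).det)
      / 2 ^ (Fintype.card V * Fintype.card V)
    = matchingPolyEval G x := by
  classical
  set n := Fintype.card V with hn
  -- Step 1: expand each determinant
  have hdet : ∀ c : V → V → ZMod 2,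
      (x • (1 : Matrix V V ℂ) -
        shiftMatrix G (fun u v => b u v + 2 * ((orientShift c u v).val : ZMod 4))
          Complex.I).det
      = ∑ σ : Equiv.Perm V, (((Equiv.Perm.sign σ : ℤ) : ℂ)) * ∏ v : V,
          ((if σ v = v then x else 0) -
            (if G.Adj (σ v) v then
              Complex.I ^ (b (σ v) v).val * (-1 : ℂ) ^ ((c (pkey σ v).1 (pkey σ v).2).val)
            else 0)) := by
    intro c
    rw [Matrix.det_apply]
    apply Finset.sum_congr rfl
    intro σ _
    rw [Units.smul_def, zsmul_eq_mul]
    congr 1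
    apply Finset.prod_congr rfl
    intro v _
    rw [Matrix.sub_apply, Matrix.smul_apply, Matrix.one_apply, smul_eq_mul,
      mul_ite, mul_one, mul_zero]
    congr 1
    show (if G.Adj (σ v) v then
        Complex.I ^ ((b (σ v) v + 2 * ((orientShift c (σ v) v).val : ZMod 4)).val) else 0) = _
    rw [I_pow_shift, orientShift_eq_pkey]
  rw [Finset.sum_congr rfl (fun c _ => hdet c), Finset.sum_comm]
  -- Step 2: evaluate the inner sum over c using key_sum
  have hstep2 : ∀ σ : Equiv.Perm V,
      (∑ c : V → V → ZMod 2, (((Equiv.Perm.sign σ : ℤ) : ℂ)) * ∏ v : V,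
        ((if σ v = v then x else 0) -
          (if G.Adj (σ v) v then
            Complex.I ^ (b (σ v) v).val * (-1 : ℂ) ^ ((c (pkey σ v).1 (pkey σ v).2).val)
          else 0)))
      = if (∀ v, σ (σ v) = v) ∧ (∀ v ∈ σ.support, G.Adj (σ v) v) then
          (((Equiv.Perm.sign σ : ℤ) : ℂ)) * ((2 : ℂ) ^ (n * n) *
            ((∏ v ∈ σ.support, (-(Complex.I ^ (b (σ v) v).val))) * x ^ (n - σ.support.card)))
        else 0 := by
    intro σ
    rw [← Finset.mul_sum, key_sum G b x σ, mul_ite, mul_zero]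
  rw [Finset.sum_congr rfl (fun σ _ => hstep2 σ), ← Finset.sum_filter]
  -- Step 3: simplify each surviving term
  have hstep3 : ∀ σ ∈ Finset.univ.filter (fun σ : Equiv.Perm V =>
      (∀ v, σ (σ v) = v) ∧ ∀ v ∈ σ.support, G.Adj (σ v) v),
      (((Equiv.Perm.sign σ : ℤ) : ℂ)) * ((2 : ℂ) ^ (n * n) *
        ((∏ v ∈ σ.support, (-(Complex.I ^ (b (σ v) v).val))) * x ^ (n - σ.support.card)))
      = ((-1 : ℂ) ^ (σ.support.card / 2) * x ^ (n - 2 * (σ.support.card / 2)))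
          * (2 : ℂ) ^ (n * n) := by
    intro σ hσ
    obtain ⟨hinv, hadj⟩ := (Finset.mem_filter.1 hσ).2
    have hmul : σ * σ = 1 := by
      apply Equiv.ext
      intro v
      exact hinv v
    obtain ⟨k0, hcard, hsign⟩ := sign_invol σ hmul
    have hk0 : σ.support.card / 2 = k0 := by omega
    rw [prod_neg_I b hb σ hinv, one_mul, hsign, hk0, hcard]
    push_cast
    ring
  rw [Finset.sum_congr rfl hstep3]
  -- Step 4: fiberwise over the number of 2-cycles
  have hmaps : ∀ σ ∈ Finset.univ.filter (fun σ : Equiv.Perm V =>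
      (∀ v, σ (σ v) = v) ∧ ∀ v ∈ σ.support, G.Adj (σ v) v),
      σ.support.card / 2 ∈ Finset.range (n / 2 + 1) := by
    intro σ _
    rw [Finset.mem_range]
    have h1 : σ.support.card ≤ n := Finset.card_le_univ _
    omega
  rw [← Finset.sum_fiberwise_of_maps_to hmaps
    (fun σ => ((-1 : ℂ) ^ (σ.support.card / 2) * x ^ (n - 2 * (σ.support.card / 2)))
      * (2 : ℂ) ^ (n * n))]
  -- Step 5: inner sums are constant and counted by matchingCount
  have hstep5 : ∀ k ∈ Finset.range (n / 2 + 1),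
      (∑ σ ∈ (Finset.univ.filter (fun σ : Equiv.Perm V =>
          (∀ v, σ (σ v) = v) ∧ ∀ v ∈ σ.support, G.Adj (σ v) v)).filter
          (fun σ => σ.support.card / 2 = k),
        ((-1 : ℂ) ^ (σ.support.card / 2) * x ^ (n - 2 * (σ.support.card / 2)))
          * (2 : ℂ) ^ (n * n))
      = ((matchingCount G k : ℂ) * ((-1 : ℂ) ^ k * x ^ (n - 2 * k))) * (2 : ℂ) ^ (n * n) := by
    intro k _
    rw [Finset.filter_filter]
    have hconst : ∀ σ ∈ Finset.univ.filter (fun σ : Equiv.Perm V =>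
        ((∀ v, σ (σ v) = v) ∧ ∀ v ∈ σ.support, G.Adj (σ v) v) ∧ σ.support.card / 2 = k),
        ((-1 : ℂ) ^ (σ.support.card / 2) * x ^ (n - 2 * (σ.support.card / 2)))
          * (2 : ℂ) ^ (n * n)
        = ((-1 : ℂ) ^ k * x ^ (n - 2 * k)) * (2 : ℂ) ^ (n * n) := by
      intro σ hσ
      rw [(Finset.mem_filter.1 hσ).2.2]
    rw [Finset.sum_congr rfl hconst, Finset.sum_const, count_eq G k, nsmul_eq_mul]
    ring
  rw [Finset.sum_congr rfl hstep5, ← Finset.sum_mul]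
  rw [mul_div_assoc, div_self (pow_ne_zero _ two_ne_zero), mul_one]
  unfold matchingPolyEval
  apply Finset.sum_congr rfl
  intro k _
  ring
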